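/- Let α ∈ ℂ and let φ, ψ : ℂ → ℂ be entire functions satisfying ψ''(x) = (2x − 2ψ(x)φ(x))·ψ(x) and φ''(x) = (2x − 2ψ(x)φ(x))·φ(x) for all x ∈ ℂ, together with φ'(x)ψ(x) − φ(x)ψ'(x) = 2α for all x ∈ ℂ. Assume ψ(x) ≠ 0 for all x ∈ ℂ. Then the function u₋₁ := −ψ'/ψ satisfies the Painlevé II equation with parameter α − 1: u₋₁''(x) = 2u₋₁(x)³ − 4x·u₋₁(x) + 4(α − 1/2) for all x ∈ ℂ. -/

import Mathlib

/-- **Proposition 2.2 (ii).** If entire functions `φ, ψ` satisfy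
`ψ''/ψ = φ''/φ = −2ψφ + 2x` and `φ'ψ − φψ' = 2α`, with `ψ` nowhere vanishing,
then `u₋₁ = −(log ψ)' = −ψ'/ψ` satisfies Painlevé II with parameter `α − 1`:
`u₋₁'' = 2u₋₁³ − 4xu₋₁ + 4(α − 1/2)`. -/
theorem um1_satisfies_painleveII
    (α : ℂ) (φ ψ : ℂ → ℂ) (hφ : Differentiable ℂ φ) (hψ : Differentiable ℂ ψ)
    (hψ'' : ∀ x : ℂ, deriv (deriv ψ) x = (2 * x - 2 * ψ x * φ x) * ψ x)
    (hφ'' : ∀ x : ℂ, deriv (deriv φ) x = (2 * x - 2 * ψ x * φ x) * φ x)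
    (hW : ∀ x : ℂ, deriv φ x * ψ x - φ x * deriv ψ x = 2 * α)
    (hψ0 : ∀ x : ℂ, ψ x ≠ 0) :
    ∀ x : ℂ,
      deriv (deriv (fun y => -(deriv ψ y / ψ y))) x =
        2 * (-(deriv ψ x / ψ x)) ^ 3 - 4 * x * (-(deriv ψ x / ψ x)) + 4 * (α - 1 / 2) := by
  have hψ' : Differentiable ℂ (deriv ψ) :=
    Complex.analyticOnNhd_univ_iff_differentiable.mp
      (Complex.analyticOnNhd_univ_iff_differentiable.mpr hψ).deriv
  intro x
  -- First derivative formula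
  have hd1 : ∀ y : ℂ, deriv (fun z => -(deriv ψ z / ψ z)) y =
      (deriv ψ y / ψ y) ^ 2 - (2 * y - 2 * ψ y * φ y) := by
    intro y
    rw [deriv.fun_neg, deriv_fun_div (hψ' y) (hψ y) (hψ0 y), hψ'' y]
    field_simp [hψ0 y]
    ring
  have hfun : deriv (fun z => -(deriv ψ z / ψ z)) =
      fun y => (deriv ψ y / ψ y) ^ 2 - (2 * y - 2 * ψ y * φ y) := funext hd1
  rw [hfun]
  have hq : Differentiable ℂ fun y => deriv ψ y / ψ y := hψ'.div hψ hψ0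
  have h1 : HasDerivAt (fun y => (deriv ψ y / ψ y) ^ 2)
      (2 * (deriv ψ x / ψ x) * (((2 * x - 2 * ψ x * φ x) * ψ x * ψ x
        - deriv ψ x * deriv ψ x) / (ψ x) ^ 2)) x := by
    have hqd : HasDerivAt (fun y => deriv ψ y / ψ y)
        (((2 * x - 2 * ψ x * φ x) * ψ x * ψ x - deriv ψ x * deriv ψ x) / (ψ x) ^ 2) x := by
      have := ((hψ' x).hasDerivAt.div (hψ x).hasDerivAt (hψ0 x))
      rw [hψ'' x] at this
      exact this
    simpa [pow_two, mul_comm, mul_assoc, mul_left_comm] using (hqd.fun_pow 2)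
  have h2 : HasDerivAt (fun y : ℂ => 2 * y - 2 * ψ y * φ y)
      (2 - (2 * deriv ψ x * φ x + 2 * ψ x * deriv φ x)) x := by
    have ha : HasDerivAt (fun y : ℂ => 2 * y) 2 x := by
      simpa using (hasDerivAt_id x).const_mul (2 : ℂ)
    have hb : HasDerivAt (fun y : ℂ => 2 * ψ y * φ y)
        (2 * deriv ψ x * φ x + 2 * ψ x * deriv φ x) x := by
      have := (((hψ x).hasDerivAt.const_mul (2 : ℂ)).fun_mul (hφ x).hasDerivAt)
      simpa [mul_assoc, mul_comm, mul_left_comm] using this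
    exact ha.sub hb
  rw [(h1.fun_sub h2).deriv]
  have hWx := hW x
  have hψx := hψ0 x
  field_simp
  ring_nf
  linear_combination (4 * (ψ x) ^ 3) * hWx
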